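/- Let T : X ⇉ X, C a closed subset of a Euclidean space X, w ∈ C, and suppose there exist δ > 0 and ρ ∈ [0,1) such that for all x ∈ B(w, δ), all x₊ ∈ Tx, and all p ∈ P_C x: ‖x₊ - p‖ ≤ ρ‖x - p‖. Let (x_n) be generated by T (x_{n+1} ∈ Tx_n). Then whenever x_0 ∈ B(w, δ(1-ρ)/2), there exists x̄ ∈ C ∩ B(w, δ) with ‖x_n - x̄‖ ≤ ((1+ρ)‖x_0 - w‖/(1-ρ)) ρⁿ for all n. -/

import Mathlib

open Metric Set Filter

/-- The metric projection of `x` onto `C`, as a set. -/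
noncomputable def projSet {X : Type*} [NormedAddCommGroup X]
    (C : Set X) (x : X) : Set X :=
  {p | p ∈ C ∧ dist x p = Metric.infDist x C}

/-- local R-linear convergence for operators contracting toward
projections onto `C` (cf. [Pha14, Proposition 2.11]). -/
theorem rlinear_convergence_of_contraction_toward_proj
    {X : Type*} [NormedAddCommGroup X] [InnerProductSpace ℝ X] [FiniteDimensional ℝ X]
    (T : X → Set X) (C : Set X) (hCcl : IsClosed C) (hCne : C.Nonempty)
    (w : X) (hw : w ∈ C) (δ ρ : ℝ) (hδ : 0 < δ) (hρ0 : 0 ≤ ρ) (hρ1 : ρ < 1)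
    (hT : ∀ x ∈ closedBall w δ, ∀ xp ∈ T x, ∀ p ∈ projSet C x,
      ‖xp - p‖ ≤ ρ * ‖x - p‖)
    (x : ℕ → X) (hx : ∀ n, x (n + 1) ∈ T (x n))
    (hx0 : x 0 ∈ closedBall w (δ * (1 - ρ) / 2)) :
    ∃ xb ∈ C ∩ closedBall w δ,
      ∀ n, ‖x n - xb‖ ≤ ((1 + ρ) * ‖x 0 - w‖ / (1 - ρ)) * ρ ^ n := by
  set D₀ := Metric.infDist (x 0) C with hD₀
  set a₀ := ‖x 0 - w‖ with ha₀
  have hρ1' : (0:ℝ) < 1 - ρ := by linarith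
  have hD0nn : 0 ≤ D₀ := Metric.infDist_nonneg
  have hD0a : D₀ ≤ a₀ := by
    have := Metric.infDist_le_dist_of_mem (x := x 0) hw
    rwa [dist_eq_norm] at this
  have ha0nn : 0 ≤ a₀ := norm_nonneg _
  have ha0δ : a₀ ≤ δ * (1 - ρ) / 2 := by
    rw [Metric.mem_closedBall, dist_eq_norm] at hx0
    exact hx0
  -- one-step lemma
  have stepLem : ∀ n, ‖x n - w‖ ≤ δ → Metric.infDist (x n) C ≤ ρ ^ n * D₀ →
      Metric.infDist (x (n + 1)) C ≤ ρ ^ (n + 1) * D₀ ∧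
        ‖x (n + 1) - x n‖ ≤ (1 + ρ) * (ρ ^ n * D₀) := by
    intro n hball hdn
    obtain ⟨p, hpC, hpd⟩ := hCcl.exists_infDist_eq_dist hCne (x n)
    have hp : p ∈ projSet C (x n) := ⟨hpC, hpd.symm⟩
    have hcon := hT (x n) (by rwa [Metric.mem_closedBall, dist_eq_norm]) (x (n + 1)) (hx n) p hp
    have hnp : ‖x n - p‖ = Metric.infDist (x n) C := by
      rw [← dist_eq_norm, ← hpd]
    have h1 : Metric.infDist (x (n + 1)) C ≤ ρ ^ (n + 1) * D₀ := by
      have := Metric.infDist_le_dist_of_mem (x := x (n + 1)) hpC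
      rw [dist_eq_norm] at this
      have h2 : ‖x (n + 1) - p‖ ≤ ρ * (ρ ^ n * D₀) := by
        calc ‖x (n + 1) - p‖ ≤ ρ * ‖x n - p‖ := hcon
        _ = ρ * Metric.infDist (x n) C := by rw [hnp]
        _ ≤ ρ * (ρ ^ n * D₀) := by
            exact mul_le_mul_of_nonneg_left hdn hρ0
      calc Metric.infDist (x (n + 1)) C ≤ ‖x (n + 1) - p‖ := this
      _ ≤ ρ * (ρ ^ n * D₀) := h2
      _ = ρ ^ (n + 1) * D₀ := by ring
    refine ⟨h1, ?_⟩
    have : ‖x (n + 1) - x n‖ ≤ ‖x (n + 1) - p‖ + ‖p - x n‖ := by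
      simpa using norm_sub_le_norm_sub_add_norm_sub (x (n+1)) p (x n)
    have hpn : ‖p - x n‖ = Metric.infDist (x n) C := by
      rw [norm_sub_rev, hnp]
    calc ‖x (n + 1) - x n‖ ≤ ‖x (n + 1) - p‖ + ‖p - x n‖ := this
    _ ≤ ρ * ‖x n - p‖ + ‖p - x n‖ := by linarith [hcon]
    _ = ρ * Metric.infDist (x n) C + Metric.infDist (x n) C := by rw [hnp, hpn]
    _ = (1 + ρ) * Metric.infDist (x n) C := by ring
    _ ≤ (1 + ρ) * (ρ ^ n * D₀) := by
        exact mul_le_mul_of_nonneg_left hdn (by linarith)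
  -- main invariant
  have key : ∀ n, Metric.infDist (x n) C ≤ ρ ^ n * D₀ ∧
      (1 - ρ) * ‖x n - w‖ ≤ (1 - ρ) * a₀ + (1 + ρ) * (1 - ρ ^ n) * D₀ := by
    intro n
    induction n with
    | zero => constructor <;> simp [hD₀, ha₀]
    | succ n ih =>
      obtain ⟨h1, h2⟩ := ih
      have hρn0 : 0 ≤ ρ ^ n := pow_nonneg hρ0 n
      have hρn1 : ρ ^ n ≤ 1 := pow_le_one₀ hρ0 hρ1.le
      have hball : ‖x n - w‖ ≤ δ := by nlinarith [mul_nonneg hρn0 hD0nn]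
      obtain ⟨hs1, hs2⟩ := stepLem n hball h1
      refine ⟨hs1, ?_⟩
      have htri : ‖x (n + 1) - w‖ ≤ ‖x (n + 1) - x n‖ + ‖x n - w‖ := by
        simpa using norm_sub_le_norm_sub_add_norm_sub (x (n+1)) (x n) w
      have hps : ρ ^ (n + 1) = ρ ^ n * ρ := pow_succ ρ n
      calc (1 - ρ) * ‖x (n + 1) - w‖
          ≤ (1 - ρ) * (‖x (n + 1) - x n‖ + ‖x n - w‖) :=
            mul_le_mul_of_nonneg_left htri hρ1'.le
        _ = (1 - ρ) * ‖x (n + 1) - x n‖ + (1 - ρ) * ‖x n - w‖ := by ring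
        _ ≤ (1 - ρ) * ((1 + ρ) * (ρ ^ n * D₀)) +
            ((1 - ρ) * a₀ + (1 + ρ) * (1 - ρ ^ n) * D₀) := by
            have := mul_le_mul_of_nonneg_left hs2 hρ1'.le
            linarith
        _ = (1 - ρ) * a₀ + (1 + ρ) * (1 - ρ ^ (n + 1)) * D₀ := by rw [hps]; ring
  have ball : ∀ n, x n ∈ Metric.closedBall w δ := by
    intro n
    obtain ⟨h1, h2⟩ := key n
    have hρn0 : 0 ≤ ρ ^ n := pow_nonneg hρ0 n
    have hρn1 : ρ ^ n ≤ 1 := pow_le_one₀ hρ0 hρ1.le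
    rw [Metric.mem_closedBall, dist_eq_norm]
    nlinarith [mul_nonneg hρn0 hD0nn]
  have hstep : ∀ n, dist (x n) (x (n + 1)) ≤ ((1 + ρ) * D₀) * ρ ^ n := by
    intro n
    have := (stepLem n (by
      have := ball n; rwa [Metric.mem_closedBall, dist_eq_norm] at this) (key n).1).2
    rw [dist_eq_norm, norm_sub_rev]
    calc ‖x (n + 1) - x n‖ ≤ (1 + ρ) * (ρ ^ n * D₀) := this
    _ = ((1 + ρ) * D₀) * ρ ^ n := by ring
  have hcau : CauchySeq x := cauchySeq_of_le_geometric ρ ((1 + ρ) * D₀) hρ1 hstep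
  obtain ⟨xb, hxb⟩ := cauchySeq_tendsto_of_complete hcau
  have hdlim : ∀ n, dist (x n) xb ≤ ((1 + ρ) * D₀) * ρ ^ n / (1 - ρ) :=
    dist_le_of_le_geometric_of_tendsto ρ ((1 + ρ) * D₀) hρ1 hstep hxb
  have hxbC : xb ∈ C := by
    rw [hCcl.mem_iff_infDist_zero hCne]
    refine le_antisymm ?_ Metric.infDist_nonneg
    have hbd : ∀ n, Metric.infDist xb C ≤ (D₀ + (1 + ρ) * D₀ / (1 - ρ)) * ρ ^ n := by
      intro n
      calc Metric.infDist xb C ≤ Metric.infDist (x n) C + dist xb (x n) :=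
        Metric.infDist_le_infDist_add_dist
      _ ≤ ρ ^ n * D₀ + ((1 + ρ) * D₀) * ρ ^ n / (1 - ρ) := by
          have := hdlim n
          rw [dist_comm] at this
          linarith [(key n).1]
      _ = (D₀ + (1 + ρ) * D₀ / (1 - ρ)) * ρ ^ n := by ring
    have hlim0 : Tendsto (fun n : ℕ => (D₀ + (1 + ρ) * D₀ / (1 - ρ)) * ρ ^ n)
        atTop (nhds 0) := by
      simpa using (tendsto_pow_atTop_nhds_zero_of_lt_one hρ0 hρ1).const_mul
        (D₀ + (1 + ρ) * D₀ / (1 - ρ))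
    exact ge_of_tendsto' hlim0 hbd
  have hxbB : xb ∈ Metric.closedBall w δ :=
    Metric.isClosed_closedBall.mem_of_tendsto hxb (Eventually.of_forall ball)
  refine ⟨xb, ⟨hxbC, hxbB⟩, fun n => ?_⟩
  rw [← dist_eq_norm]
  calc dist (x n) xb ≤ ((1 + ρ) * D₀) * ρ ^ n / (1 - ρ) := hdlim n
  _ = ((1 + ρ) * D₀ / (1 - ρ)) * ρ ^ n := by ring
  _ ≤ ((1 + ρ) * a₀ / (1 - ρ)) * ρ ^ n := by
      gcongr
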